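/- Fix a finite nonempty set S ⊂ ℝ and fixed points t_1, ..., t_{n−1} ∈ ℝ, and let T(t) = {t_1, ..., t_{n−1}, t}. Then d^{MH}_1(S, T(t)) / |t| → 1/n as |t| → ∞. -/

import Mathlib

open Finset Metric Filter

noncomputable def dMH1 (S T : Finset ℝ) : ℝ :=
  max ((∑ s ∈ S, infDist s (T : Set ℝ)) / S.card) ((∑ t ∈ T, infDist t (S : Set ℝ)) / T.card)

private lemma le_infDist_aux {s : Set ℝ} (hs : s.Nonempty) {x b : ℝ}
    (h : ∀ y ∈ s, b ≤ dist x y) : b ≤ infDist x s := by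
  by_contra hlt
  obtain ⟨y, hy, hd⟩ := (Metric.infDist_lt_iff hs).1 (lt_of_not_ge hlt)
  exact absurd (h y hy) (not_le.2 hd)

theorem mh1_outlier_asymptotic (S T₀ : Finset ℝ) (hS : S.Nonempty)
    (n : ℕ) (hn : n = T₀.card + 1) :
    Tendsto (fun t : ℝ => dMH1 S (insert t T₀) / |t|)
      (cocompact ℝ) (nhds (1 / n)) := by
  obtain ⟨s₀, hs₀⟩ := hS
  have hS' : S.Nonempty := ⟨s₀, hs₀⟩
  set K : ℝ := S.sup' hS' (fun s => |s|) with hKdef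
  have hKs : ∀ s ∈ S, |s| ≤ K := fun s hs => Finset.le_sup' _ hs
  have hK0 : 0 ≤ K := le_trans (abs_nonneg s₀) (hKs s₀ hs₀)
  have hScard : (0:ℝ) < S.card := by exact_mod_cast Finset.card_pos.mpr hS'
  have hSne : (S : Set ℝ).Nonempty := ⟨s₀, by exact_mod_cast hs₀⟩
  have hnpos : (0:ℝ) < n := by
    have : 0 < n := by omega
    exact_mod_cast this
  -- bounds on infDist t S
  have hlow : ∀ t : ℝ, |t| - K ≤ infDist t (S : Set ℝ) := by
    intro t
    refine le_infDist_aux hSne fun y hy => ?_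
    have hy' : y ∈ S := by exact_mod_cast hy
    have := hKs y hy'
    have h1 : |t| - |y| ≤ |t - y| := abs_sub_abs_le_abs_sub t y
    rw [Real.dist_eq]
    linarith
  have hup : ∀ t : ℝ, infDist t (S : Set ℝ) ≤ |t| + K := by
    intro t
    have h1 : infDist t (S : Set ℝ) ≤ dist t s₀ :=
      infDist_le_dist_of_mem (by exact_mod_cast hs₀)
    have h2 : |t - s₀| ≤ |t| + |s₀| := abs_sub t s₀
    have := hKs s₀ hs₀
    rw [Real.dist_eq] at h1
    linarith
  have habs : Tendsto (fun t : ℝ => |t|) (cocompact ℝ) atTop := by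
    exact tendsto_norm_cocompact_atTop (E := ℝ)
  -- key eventual bound
  have key : ∃ C : ℝ, ∀ᶠ t in cocompact ℝ, |dMH1 S (insert t T₀) - |t| / n| ≤ C := by
    rcases T₀.eq_empty_or_nonempty with rfl | hT
    · refine ⟨K, .of_forall fun t => ?_⟩
      have hn1 : n = 1 := by simpa using hn
      have hA : dMH1 S (insert t ∅) = max ((∑ s ∈ S, dist s t) / S.card) (infDist t (S:Set ℝ)) := by
        simp [dMH1, infDist_singleton]
      have hsum1 : ∑ s ∈ S, dist s t ≤ S.card * (|t| + K) := by
        calc ∑ s ∈ S, dist s t ≤ ∑ s ∈ S, (|t| + K) := by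
              refine Finset.sum_le_sum fun s hs => ?_
              rw [Real.dist_eq]
              have := hKs s hs
              have h2 : |s - t| ≤ |s| + |t| := abs_sub s t
              linarith
          _ = S.card * (|t| + K) := by rw [Finset.sum_const, nsmul_eq_mul]
      have hsum2 : (S.card : ℝ) * (|t| - K) ≤ ∑ s ∈ S, dist s t := by
        calc (S.card : ℝ) * (|t| - K) = ∑ _s ∈ S, (|t| - K) := by
              rw [Finset.sum_const, nsmul_eq_mul]
          _ ≤ ∑ s ∈ S, dist s t := by
              refine Finset.sum_le_sum fun s hs => ?_
              rw [Real.dist_eq]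
              have := hKs s hs
              have h2 : |t| - |s| ≤ |t - s| := abs_sub_abs_le_abs_sub t s
              rw [abs_sub_comm] at h2
              linarith
      have hAup : (∑ s ∈ S, dist s t) / S.card ≤ |t| + K := by
        rw [div_le_iff₀ hScard]; linarith
      have hAlow : |t| - K ≤ (∑ s ∈ S, dist s t) / S.card := by
        rw [le_div_iff₀ hScard]; linarith
      rw [hA, hn1]
      have h3 := hlow t
      have h4 := hup t
      rcases max_cases ((∑ s ∈ S, dist s t) / S.card) (infDist t (S:Set ℝ)) with ⟨h,_⟩|⟨h,_⟩ <;>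
        rw [h] <;> simp only [Nat.cast_one, div_one] <;>
        exact abs_le.mpr ⟨by linarith, by linarith⟩
    · set a := (∑ s ∈ S, infDist s (T₀ : Set ℝ)) / S.card with hadef
      set c := ∑ x ∈ T₀, infDist x (S : Set ℝ) with hcdef
      have hc0 : 0 ≤ c := Finset.sum_nonneg fun _ _ => infDist_nonneg
      have ha0 : 0 ≤ a := div_nonneg (Finset.sum_nonneg fun _ _ => infDist_nonneg)
        (Nat.cast_nonneg _)
      refine ⟨K + c, ?_⟩
      set L := T₀.sup' hT (fun x => |x|) with hLdef
      filter_upwards [habs.eventually_ge_atTop (max (K + n * a) (L + 1))] with t ht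
      have ht1 : K + n * a ≤ |t| := le_trans (le_max_left _ _) ht
      have ht2 : L + 1 ≤ |t| := le_trans (le_max_right _ _) ht
      have htT : t ∉ T₀ := by
        intro h
        have : |t| ≤ L := Finset.le_sup' _ h
        linarith
      have hcard : ((insert t T₀).card : ℝ) = n := by
        rw [Finset.card_insert_of_notMem htT, hn]
      have hBsum : ∑ x ∈ insert t T₀, infDist x (S : Set ℝ)
          = infDist t (S : Set ℝ) + c := Finset.sum_insert htT
      have hT'ne : (T₀ : Set ℝ).Nonempty := by
        obtain ⟨x, hx⟩ := hT; exact ⟨x, by exact_mod_cast hx⟩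
      have hn1 : (1:ℝ) ≤ n := by
        have : 1 ≤ n := by omega
        exact_mod_cast this
      have hnum : ∑ s ∈ S, infDist s ((insert t T₀ : Finset ℝ) : Set ℝ)
          ≤ ∑ s ∈ S, infDist s (T₀ : Set ℝ) := by
        refine Finset.sum_le_sum fun s hs => ?_
        rw [Finset.coe_insert]
        exact infDist_le_infDist_of_subset (Set.subset_insert _ _) hT'ne
      have hAle : (∑ s ∈ S, infDist s ((insert t T₀ : Finset ℝ) : Set ℝ)) / S.card ≤ a := by
        rw [hadef]
        gcongr
      have h3 := hlow t
      have h4 := hup t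
      have hdm : dMH1 S (insert t T₀) = (infDist t (S : Set ℝ) + c) / n := by
        unfold dMH1
        rw [hBsum, hcard]
        refine max_eq_right (hAle.trans ?_)
        rw [le_div_iff₀ hnpos]
        nlinarith
      rw [hdm]
      have heq2 : (infDist t (S : Set ℝ) + c) / n - |t| / n
          = (infDist t (S : Set ℝ) + c - |t|) / n := by ring
      rw [heq2, abs_div, abs_of_pos hnpos]
      refine le_trans ?_ (div_le_self (by linarith) hn1)
      gcongr
      exact abs_le.mpr ⟨by linarith, by linarith⟩
  -- conclude from key bound
  obtain ⟨C, hC⟩ := key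
  rw [tendsto_iff_dist_tendsto_zero]
  refine squeeze_zero' (.of_forall fun t => dist_nonneg)
    ?_ (tendsto_const_nhds.div_atTop habs : Tendsto (fun t : ℝ => C / |t|) _ _)
  filter_upwards [hC, habs.eventually_ge_atTop 1] with t h1 h2
  have ht0 : (0:ℝ) < |t| := lt_of_lt_of_le one_pos h2
  rw [Real.dist_eq]
  have heq : dMH1 S (insert t T₀) / |t| - 1 / n
      = (dMH1 S (insert t T₀) - |t| / n) / |t| := by
    have h5 : |t| / n / |t| = 1 / n := by
      rw [div_div, mul_comm, ← div_div, div_self ht0.ne']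
    rw [sub_div, h5]
  rw [heq, abs_div, abs_of_pos ht0]
  gcongr
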